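/- There exists a Borel measurable function ℓ : X^ℕ → X such that for every sequence (x_n) in X whose closure of range is compact, ℓ((x_n)) is a limit point (cluster point) of the sequence (x_n). -/

import Mathlib

open Filter Metric Set TopologicalSpace

namespace MLPSAux

open scoped Classical

variable {X : Type*} [MetricSpace X] [TopologicalSpace.SeparableSpace X] [Nonempty X]

/-- A fixed dense sequence. -/
noncomputable def D (X : Type*) [MetricSpace X] [TopologicalSpace.SeparableSpace X]
    [Nonempty X] : ℕ → X := TopologicalSpace.denseSeq X

lemma denseRange_D : DenseRange (D X) := TopologicalSpace.denseRange_denseSeq X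

/-- The recursive state: `(auxF u n).2` is the current index set, and
`(auxF u n).1` is the previously selected center index. -/
noncomputable def auxF (u : ℕ → X) : ℕ → ℕ × Set ℕ
  | 0 => (0, Set.univ)
  | n + 1 =>
    let p := auxF u n
    if h : ∃ k, {i ∈ p.2 | dist (u i) (D X k) ≤ (1/2 : ℝ) ^ n}.Infinite then
      (Nat.find h, {i ∈ p.2 | dist (u i) (D X (Nat.find h)) ≤ (1/2 : ℝ) ^ n})
    else p

/-- The condition that the refinement succeeds at stage `n`. -/
def Cond (u : ℕ → X) (n : ℕ) : Prop :=
  ∃ k, {i ∈ (auxF u n).2 | dist (u i) (D X k) ≤ (1/2 : ℝ) ^ n}.Infinite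

lemma auxF_succ (u : ℕ → X) (n : ℕ) :
    auxF u (n + 1) =
      if h : Cond u n then
        (Nat.find h, {i ∈ (auxF u n).2 | dist (u i) (D X (Nat.find h)) ≤ (1/2 : ℝ) ^ n})
      else auxF u n := rfl

lemma auxF_succ_of_cond {u : ℕ → X} {n : ℕ} (h : Cond u n) :
    auxF u (n + 1) =
      (Nat.find h, {i ∈ (auxF u n).2 | dist (u i) (D X (Nat.find h)) ≤ (1/2 : ℝ) ^ n}) := by
  rw [auxF_succ, dif_pos h]

lemma auxF_succ_of_not_cond {u : ℕ → X} {n : ℕ} (h : ¬ Cond u n) :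
    auxF u (n + 1) = auxF u n := by
  rw [auxF_succ, dif_neg h]

lemma not_cond_succ {u : ℕ → X} {n : ℕ} (h : ¬ Cond u n) : ¬ Cond u (n + 1) := by
  rintro ⟨k, hk⟩
  rw [auxF_succ_of_not_cond h] at hk
  exact h ⟨k, hk.mono (fun i hi => ⟨hi.1,
    hi.2.trans (pow_le_pow_of_le_one (by norm_num) (by norm_num) (Nat.le_succ n))⟩)⟩

lemma cond_of_cond_succ {u : ℕ → X} {n : ℕ} (h : Cond u (n + 1)) : Cond u n := by
  by_contra hn; exact not_cond_succ hn h

lemma dist_mem_succ {u : ℕ → X} {n : ℕ} (h : Cond u n) {i : ℕ} (hi : i ∈ (auxF u (n + 1)).2) :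
    dist (u i) (D X ((auxF u (n + 1)).1)) ≤ (1/2 : ℝ) ^ n := by
  rw [auxF_succ_of_cond h] at hi ⊢
  exact hi.2

lemma mem_of_mem_succ {u : ℕ → X} {n : ℕ} {i : ℕ} (hi : i ∈ (auxF u (n + 1)).2) :
    i ∈ (auxF u n).2 := by
  by_cases h : Cond u n
  · rw [auxF_succ_of_cond h] at hi; exact hi.1
  · rwa [auxF_succ_of_not_cond h] at hi

/-- The approximating sequence. -/
noncomputable def f (u : ℕ → X) (n : ℕ) : X := D X ((auxF u (n + 1)).1)

lemma infinite_succ {u : ℕ → X} {n : ℕ} (h : Cond u n) : ((auxF u (n + 1)).2).Infinite := by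
  rw [auxF_succ_of_cond h]
  exact Nat.find_spec h

lemma dist_f (u : ℕ → X) (n : ℕ) : dist (f u n) (f u (n + 1)) ≤ 2 * (1/2 : ℝ) ^ n := by
  by_cases h : Cond u (n + 1)
  · have hc : Cond u n := cond_of_cond_succ h
    obtain ⟨i, hi⟩ := (infinite_succ h).nonempty
    have h1 : dist (u i) (D X ((auxF u (n + 2)).1)) ≤ (1/2 : ℝ) ^ (n + 1) :=
      dist_mem_succ h hi
    have h2 : dist (u i) (D X ((auxF u (n + 1)).1)) ≤ (1/2 : ℝ) ^ n :=
      dist_mem_succ hc (mem_of_mem_succ hi)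
    unfold f
    calc dist (D X ((auxF u (n+1)).1)) (D X ((auxF u (n+2)).1))
        ≤ dist (D X ((auxF u (n+1)).1)) (u i) + dist (u i) (D X ((auxF u (n+2)).1)) :=
          dist_triangle _ _ _
    _ ≤ (1/2 : ℝ) ^ n + (1/2 : ℝ) ^ (n + 1) := add_le_add (by rw [dist_comm]; exact h2) h1
    _ ≤ 2 * (1/2 : ℝ) ^ n := by ring_nf; nlinarith [pow_pos (by norm_num : (0:ℝ) < 1/2) n]
  · have : auxF u (n + 2) = auxF u (n + 1) := auxF_succ_of_not_cond h
    unfold f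
    rw [this, dist_self]
    positivity

lemma cauchySeq_f (u : ℕ → X) : CauchySeq (f u) :=
  cauchySeq_of_le_geometric (1/2 : ℝ) 2 (by norm_num) (dist_f u)

section Compact

variable {u : ℕ → X}

lemma cond_of_infinite (hC : IsCompact (closure (Set.range u))) {n : ℕ}
    (hS : ((auxF u n).2).Infinite) : Cond u n := by
  set r : ℝ := (1/2 : ℝ) ^ n with hr
  have hr0 : 0 < r := by positivity
  have hcov : closure (Set.range u) ⊆ ⋃ k, Metric.ball (D X k) r := by
    intro x _
    obtain ⟨k, hk⟩ := Metric.denseRange_iff.1 (denseRange_D (X := X)) x r hr0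
    exact Set.mem_iUnion.2 ⟨k, by simpa [Metric.mem_ball, dist_comm] using hk⟩
  obtain ⟨t, ht⟩ := hC.elim_finite_subcover (fun k => Metric.ball (D X k) r)
    (fun k => Metric.isOpen_ball) hcov
  have hsub : (auxF u n).2 ⊆ ⋃ k ∈ t, {i ∈ (auxF u n).2 | dist (u i) (D X k) < r} := by
    intro i hi
    have : u i ∈ ⋃ k ∈ t, Metric.ball (D X k) r := ht (subset_closure (Set.mem_range_self i))
    obtain ⟨k, hkt, hk⟩ := Set.mem_iUnion₂.1 this
    exact Set.mem_iUnion₂.2 ⟨k, hkt, hi, by simpa [Metric.mem_ball] using hk⟩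
  by_contra hcond
  simp only [Cond, not_exists, Set.not_infinite] at hcond
  apply hS.mono hsub
  apply Set.Finite.biUnion t.finite_toSet
  intro k _
  exact (hcond k).subset (fun i hi => ⟨hi.1, le_of_lt hi.2⟩)

lemma cond_all (hC : IsCompact (closure (Set.range u))) (n : ℕ) :
    Cond u n ∧ ((auxF u (n + 1)).2).Infinite := by
  induction n with
  | zero =>
    have h0 : Cond u 0 := cond_of_infinite hC (by simp [auxF, Set.infinite_univ])
    exact ⟨h0, infinite_succ h0⟩
  | succ n ih =>
    have hc : Cond u (n + 1) := cond_of_infinite hC ih.2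
    exact ⟨hc, infinite_succ hc⟩

end Compact

section Measurability

variable [MeasurableSpace X] [BorelSpace X]

lemma infinite_iff (s : Set ℕ) : s.Infinite ↔ ∀ N, ∃ i ∈ s, N < i :=
  Set.infinite_iff_exists_gt

lemma measurable_auxF : ∀ n : ℕ,
    (∀ i, MeasurableSet {u : ℕ → X | i ∈ (auxF u n).2}) ∧
    (∀ k, MeasurableSet {u : ℕ → X | (auxF u n).1 = k}) := by
  intro n
  induction n with
  | zero =>
    constructor
    · intro i; simp [auxF]
    · intro k
      by_cases h : 0 = k <;> simp [auxF, h]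
  | succ n ih =>
    obtain ⟨ihS, ihc⟩ := ih
    -- the basic event sets
    have hball : ∀ (i k : ℕ), MeasurableSet {u : ℕ → X | dist (u i) (D X k) ≤ (1/2 : ℝ) ^ n} := by
      intro i k
      have : {u : ℕ → X | dist (u i) (D X k) ≤ (1/2 : ℝ) ^ n}
          = (fun u : ℕ → X => u i) ⁻¹' Metric.closedBall (D X k) ((1/2 : ℝ) ^ n) := by
        ext u; simp [Metric.mem_closedBall]
      rw [this]
      exact (measurable_pi_apply i) Metric.isClosed_closedBall.measurableSet
    have hE : ∀ k : ℕ, MeasurableSet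
        {u : ℕ → X | {i ∈ (auxF u n).2 | dist (u i) (D X k) ≤ (1/2 : ℝ) ^ n}.Infinite} := by
      intro k
      have : {u : ℕ → X | {i ∈ (auxF u n).2 | dist (u i) (D X k) ≤ (1/2 : ℝ) ^ n}.Infinite}
          = ⋂ N : ℕ, ⋃ i : ℕ, ⋃ (_ : N < i),
              ({u : ℕ → X | i ∈ (auxF u n).2} ∩
                {u : ℕ → X | dist (u i) (D X k) ≤ (1/2 : ℝ) ^ n}) := by
        ext u
        simp only [Set.mem_setOf_eq, Set.mem_iInter, Set.mem_iUnion, Set.mem_inter_iff,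
          infinite_iff]
        constructor
        · rintro h N
          obtain ⟨i, ⟨hi1, hi2⟩, hNi⟩ := h N
          exact ⟨i, hNi, hi1, hi2⟩
        · rintro h N
          obtain ⟨i, hNi, hi1, hi2⟩ := h N
          exact ⟨i, ⟨hi1, hi2⟩, hNi⟩
      rw [this]
      exact MeasurableSet.iInter fun N => MeasurableSet.iUnion fun i =>
        MeasurableSet.iUnion fun _ => (ihS i).inter (hball i k)
    have hA : MeasurableSet {u : ℕ → X | Cond u n} := by
      have : {u : ℕ → X | Cond u n} = ⋃ k, {u : ℕ → X |
          {i ∈ (auxF u n).2 | dist (u i) (D X k) ≤ (1/2 : ℝ) ^ n}.Infinite} := by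
        ext u; simp [Cond]
      rw [this]
      exact MeasurableSet.iUnion hE
    -- measurability of the find value on the success set
    have hfind : ∀ k : ℕ, MeasurableSet {u : ℕ → X | ∃ h : Cond u n, Nat.find h = k} := by
      intro k
      have : {u : ℕ → X | ∃ h : Cond u n, Nat.find h = k}
          = {u : ℕ → X | {i ∈ (auxF u n).2 | dist (u i) (D X k) ≤ (1/2 : ℝ) ^ n}.Infinite}
            ∩ ⋂ j : ℕ, ⋂ (_ : j < k),
              {u : ℕ → X |
                {i ∈ (auxF u n).2 | dist (u i) (D X j) ≤ (1/2 : ℝ) ^ n}.Infinite}ᶜ := by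
        ext u
        simp only [Set.mem_setOf_eq, Set.mem_inter_iff, Set.mem_iInter, Set.mem_compl_iff]
        constructor
        · rintro ⟨h, rfl⟩
          exact ⟨Nat.find_spec h, fun j hj => Nat.find_min h hj⟩
        · rintro ⟨hk, hmin⟩
          have hcond : Cond u n := ⟨k, hk⟩
          refine ⟨hcond, ?_⟩
          exact (Nat.find_eq_iff hcond).2 ⟨hk, hmin⟩
      rw [this]
      exact (hE k).inter (MeasurableSet.iInter fun j => MeasurableSet.iInter fun _ => (hE j).compl)
    have hc1 : ∀ k, MeasurableSet {u : ℕ → X | (auxF u (n + 1)).1 = k} := by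
      intro k
      have : {u : ℕ → X | (auxF u (n + 1)).1 = k}
          = {u : ℕ → X | ∃ h : Cond u n, Nat.find h = k}
            ∪ ({u : ℕ → X | Cond u n}ᶜ ∩ {u : ℕ → X | (auxF u n).1 = k}) := by
        ext u
        simp only [Set.mem_setOf_eq, Set.mem_union, Set.mem_inter_iff, Set.mem_compl_iff]
        by_cases h : Cond u n
        · rw [auxF_succ_of_cond h]
          simp [h]
        · rw [auxF_succ_of_not_cond h]
          simp [h]
      rw [this]
      exact (hfind k).union (hA.compl.inter (ihc k))
    refine ⟨?_, hc1⟩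
    intro i
    have : {u : ℕ → X | i ∈ (auxF u (n + 1)).2}
        = ({u : ℕ → X | Cond u n}ᶜ ∩ {u : ℕ → X | i ∈ (auxF u n).2})
          ∪ ⋃ k : ℕ, ({u : ℕ → X | ∃ h : Cond u n, Nat.find h = k}
              ∩ {u : ℕ → X | i ∈ (auxF u n).2}
              ∩ {u : ℕ → X | dist (u i) (D X k) ≤ (1/2 : ℝ) ^ n}) := by
      ext u
      simp only [Set.mem_setOf_eq, Set.mem_union, Set.mem_inter_iff, Set.mem_compl_iff,
        Set.mem_iUnion]
      by_cases h : Cond u n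
      · rw [auxF_succ_of_cond h]
        simp only [Set.mem_setOf_eq, Set.mem_sep_iff]
        constructor
        · rintro ⟨hi, hd⟩
          exact Or.inr ⟨Nat.find h, ⟨⟨h, rfl⟩, hi⟩, hd⟩
        · rintro (⟨hnc, _⟩ | ⟨k, ⟨⟨h', rfl⟩, hi⟩, hd⟩)
          · exact absurd h hnc
          · exact ⟨hi, hd⟩
      · rw [auxF_succ_of_not_cond h]
        constructor
        · intro hi; exact Or.inl ⟨h, hi⟩
        · rintro (⟨_, hi⟩ | ⟨k, ⟨⟨h', _⟩, _⟩, _⟩)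
          · exact hi
          · exact absurd h' h
    rw [this]
    exact (hA.compl.inter (ihS i)).union (MeasurableSet.iUnion fun k =>
      ((hfind k).inter (ihS i)).inter (hball i k))

lemma measurable_f (n : ℕ) : Measurable (fun u : ℕ → X => f u n) := by
  have hc : Measurable (fun u : ℕ → X => (auxF u (n + 1)).1) := by
    apply measurable_to_nat
    intro u
    have := (measurable_auxF (X := X) (n + 1)).2 ((auxF u (n + 1)).1)
    convert this using 1
    rfl
  exact (measurable_from_top (f := D X)).comp hc

end Measurability

end MLPSAux

/-- **Measurable selection lemma.** On a complete separable metric space `X` there exists a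
Borel measurable function `ℓ : Xᶕ → X` such that whenever the closure of the range of a
sequence `u` is compact, `ℓ u` is a cluster (limit) point of the sequence `u`. -/
theorem measurable_limit_point_selection
    {X : Type*} [MetricSpace X] [CompleteSpace X] [TopologicalSpace.SeparableSpace X]
    [MeasurableSpace X] [BorelSpace X] :
    ∃ ℓ : (ℕ → X) → X, Measurable ℓ ∧
      ∀ u : ℕ → X, IsCompact (closure (Set.range u)) →
        MapClusterPt (ℓ u) Filter.atTop u := by
  rcases isEmpty_or_nonempty X with hX | hX
  · refine ⟨fun u => u 0, measurable_pi_apply 0, fun u _ => ?_⟩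
    exact isEmptyElim (u 0)
  · open MLPSAux in
    refine ⟨fun u => limUnder Filter.atTop (f u), ?_, ?_⟩
    · have hlim : ∀ u : ℕ → X, Filter.Tendsto (f u) Filter.atTop
          (nhds (limUnder Filter.atTop (f u))) :=
        fun u => (cauchySeq_f u).tendsto_limUnder
      apply measurable_of_tendsto_metrizable (f := fun n u => f u n)
        (fun n => measurable_f n)
      rw [tendsto_pi_nhds]
      intro u
      exact (hlim u).comp (Filter.tendsto_id)
    · intro u hC
      have hlim : Filter.Tendsto (f u) Filter.atTop
          (nhds (limUnder Filter.atTop (f u))) :=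
        (cauchySeq_f u).tendsto_limUnder
      set x := limUnder Filter.atTop (f u) with hx
      rw [mapClusterPt_iff_frequently]
      intro s hs
      obtain ⟨ε, hε, hεs⟩ := Metric.mem_nhds_iff.1 hs
      -- choose n with dist (f u n) x < ε/2 and (1/2)^n < ε/2
      have h1 : ∀ᶠ n in Filter.atTop, dist (f u n) x < ε / 2 :=
        (Metric.tendsto_nhds.1 hlim) (ε / 2) (by positivity)
      have h2 : ∀ᶠ n in Filter.atTop, (1/2 : ℝ) ^ n < ε / 2 := by
        have := tendsto_pow_atTop_nhds_zero_of_lt_one (by norm_num : (0:ℝ) ≤ 1/2)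
          (by norm_num : (1/2 : ℝ) < 1)
        exact (this.eventually (eventually_lt_nhds (by positivity : (0:ℝ) < ε / 2))).mono
          (fun n hn => hn)
      obtain ⟨n, hn1, hn2⟩ := (h1.and h2).exists
      have hcond := cond_all hC n
      rw [Filter.frequently_atTop]
      intro N
      obtain ⟨i, hi, hNi⟩ := hcond.2.exists_gt N
      refine ⟨i, le_of_lt hNi, hεs ?_⟩
      have hd : dist (u i) (f u n) ≤ (1/2 : ℝ) ^ n := dist_mem_succ hcond.1 hi
      calc dist (u i) x ≤ dist (u i) (f u n) + dist (f u n) x := dist_triangle _ _ _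
        _ < ε / 2 + ε / 2 := add_lt_add_of_le_of_lt (hd.trans (le_of_lt hn2)) hn1
        _ = ε := by ring
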